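/- Let the Lévy measure ν = ν₀ + ν₁, where ν₀ is a finite measure on ℝ and ν₁ has density k(x)/|x| with k right-continuous increasing on (-∞,0) and left-continuous decreasing on (0,∞). Then the characteristic exponent ψ of the Lévy process satisfies: for all u ≥ v > 0, Re ψ(u) ≤ Re ψ(v) + c, where c = 2ν₀(ℝ). -/

import Mathlib

open MeasureTheory
open scoped ENNReal NNReal

/-- Under assumption H1 (ν = ν₀ + ν₁ with ν₀ finite and ν₁ with density k(x)/|x|,
k right-continuous increasing on (-∞,0) and left-continuous decreasing on (0,∞)),
the characteristic exponent satisfies `Re ψ(u) ≤ Re ψ(v) + 2ν₀(ℝ)` for all `u ≥ v > 0`. -/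
theorem stmt3 (a : ℝ) (ν ν₀ : Measure ℝ) [IsFiniteMeasure ν₀]
    (k : ℝ → ℝ) (hkmeas : Measurable k) (hknn : ∀ x, 0 ≤ k x)
    (hν : ν = ν₀ + volume.withDensity (fun x => ENNReal.ofReal (k x / |x|)))
    (hkmono : MonotoneOn k (Set.Iio 0)) (hkanti : AntitoneOn k (Set.Ioi 0))
    (hkrc : ∀ x < (0:ℝ), ContinuousWithinAt k (Set.Ici x) x)
    (hklc : ∀ x > (0:ℝ), ContinuousWithinAt k (Set.Iic x) x)
    (hcos : ∀ u : ℝ, Integrable (fun x => Real.cos (u * x) - 1) ν)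
    (ψRe : ℝ → ℝ)
    (hψ : ∀ u : ℝ, ψRe u = -a ^ 2 * u ^ 2 / 2 + ∫ x, (Real.cos (u * x) - 1) ∂ν) :
    ∀ u v : ℝ, 0 < v → v ≤ u → ψRe u ≤ ψRe v + 2 * (ν₀ Set.univ).toReal := by
  intro u v hv hvu
  have hu : 0 < u := lt_of_lt_of_le hv hvu
  set d : ℝ → ℝ := fun x => k x / |x| with hd
  have hdnn : ∀ x, 0 ≤ d x := fun x => div_nonneg (hknn x) (abs_nonneg x)
  have hdmeas : Measurable d := hkmeas.div measurable_abs
  -- rewrite density as NNReal coe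
  have hcoe : (fun x => ENNReal.ofReal (d x)) = (fun x => ((d x).toNNReal : ℝ≥0∞)) := rfl
  have hnnmeas : Measurable fun x => (d x).toNNReal := hdmeas.real_toNNReal
  -- integrability splits
  have hsplit : ∀ w : ℝ, Integrable (fun x => Real.cos (w * x) - 1) ν₀ ∧
      Integrable (fun x => (Real.cos (w * x) - 1) * d x) volume := by
    intro w
    have h := hcos w
    rw [hν, integrable_add_measure] at h
    refine ⟨h.1, ?_⟩
    have h2 := h.2
    rw [integrable_withDensity_iff (hdmeas.ennreal_ofReal)
      (Filter.Eventually.of_forall fun x => ENNReal.ofReal_lt_top)] at h2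
    have : (fun x => (Real.cos (w * x) - 1) * (ENNReal.ofReal (d x)).toReal)
        = fun x => (Real.cos (w * x) - 1) * d x := by
      funext x; rw [ENNReal.toReal_ofReal (hdnn x)]
    rwa [this] at h2
  -- integral over ν splits
  have hIsplit : ∀ w : ℝ, (∫ x, (Real.cos (w * x) - 1) ∂ν)
      = (∫ x, (Real.cos (w * x) - 1) ∂ν₀) + ∫ x, (Real.cos (w * x) - 1) * d x := by
    intro w
    have h := hcos w
    rw [hν, integrable_add_measure] at h
    rw [hν, integral_add_measure h.1 h.2]
    congr 1
    rw [hcoe, integral_withDensity_eq_integral_smul hnnmeas]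
    congr 1
    funext x
    simp [NNReal.smul_def, Real.coe_toNNReal _ (hdnn x), mul_comm]
  -- ν₀ part bounds
  have hν₀u : (∫ x, (Real.cos (u * x) - 1) ∂ν₀) ≤ 0 := by
    apply integral_nonpos
    intro x
    simp only [Pi.zero_apply, sub_nonpos]
    exact Real.cos_le_one _
  have hν₀v : -(2 * (ν₀ Set.univ).toReal) ≤ ∫ x, (Real.cos (v * x) - 1) ∂ν₀ := by
    have : (∫ _x : ℝ, (-2 : ℝ) ∂ν₀) ≤ ∫ x, (Real.cos (v * x) - 1) ∂ν₀ := by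
      apply integral_mono (integrable_const _) (hsplit v).1
      intro x
      simp only
      have h := Real.neg_one_le_cos (v * x)
      linarith
    rw [integral_const] at this
    calc -(2 * (ν₀ Set.univ).toReal) = (ν₀ Set.univ).toReal • (-2 : ℝ) := by
          rw [smul_eq_mul]; ring
    _ ≤ _ := this
  -- key: μ₁ part monotone
  have key : (∫ x, (Real.cos (u * x) - 1) * d x) ≤ ∫ x, (Real.cos (v * x) - 1) * d x := by
    set c : ℝ := v / u with hc
    have hc0 : 0 < c := div_pos hv hu
    have hc1 : c ≤ 1 := div_le_one_of_le₀ hvu hu.le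
    have hcu : u * c = v := by rw [hc]; field_simp
    -- change of variables
    have hcov : (∫ x, (Real.cos (u * x) - 1) * d x)
        = ∫ y, c * ((Real.cos (u * (c * y)) - 1) * d (c * y)) := by
      have h1 := Measure.integral_comp_mul_left (fun x => (Real.cos (u * x) - 1) * d x) c
      rw [MeasureTheory.integral_const_mul, h1, smul_eq_mul, abs_of_pos (inv_pos.mpr hc0), ← mul_assoc,
        mul_inv_cancel₀ hc0.ne', one_mul]
    rw [hcov]
    -- pointwise comparison
    apply integral_mono ?_ ?_ ?_
    · -- integrable lhs
      exact ((hsplit u).2.comp_mul_left' hc0.ne').const_mul c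
    · exact (hsplit v).2
    · intro y
      simp only
      rcases eq_or_ne y 0 with rfl | hy
      · simp [hd]
      · simp only [hd]
        have habs : |c * y| = c * |y| := by
          rw [abs_mul, abs_of_pos hc0]
        have hcos' : u * (c * y) = v * y := by rw [← mul_assoc, hcu]
        rw [hcos', habs]
        have hyne : |y| ≠ 0 := abs_ne_zero.mpr hy
        have hynn : (0:ℝ) < |y| := abs_pos.mpr hy
        have hk : k y ≤ k (c * y) := by
          rcases hy.lt_or_gt with hy' | hy'
          · exact hkmono hy' (by exact mul_neg_of_pos_of_neg hc0 hy') 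
              (by nlinarith)
          · exact hkanti (by exact mul_pos hc0 hy') hy' (by nlinarith)
        have h1 : (1 - Real.cos (v * y)) ≥ 0 := by
          have := Real.cos_le_one (v * y); linarith
        have : c * ((Real.cos (v * y) - 1) * (k (c * y) / (c * |y|)))
            = -((1 - Real.cos (v * y)) * (k (c * y) / |y|)) := by
          field_simp
          ring
        rw [this]
        have h2 : (Real.cos (v * y) - 1) * (k y / |y|)
            = -((1 - Real.cos (v * y)) * (k y / |y|)) := by ring
        rw [h2, neg_le_neg_iff]
        gcongr
  have hsq : v ^ 2 ≤ u ^ 2 := by nlinarith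
  have hsq' : a ^ 2 * v ^ 2 ≤ a ^ 2 * u ^ 2 :=
    mul_le_mul_of_nonneg_left hsq (sq_nonneg a)
  have hquad : -a ^ 2 * u ^ 2 / 2 ≤ -a ^ 2 * v ^ 2 / 2 := by linarith
  rw [hψ u, hψ v, hIsplit u, hIsplit v]
  linarith [hν₀u, hν₀v, key]
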